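/- arXiv:1706.07357 — 2 statements merged into one kernel-verified Lean document; each statement's English description precedes it below -/
import Mathlib

section
/- Let n ≥ 1, r₂ > 0, y ∈ ℝⁿ, i ∈ {1,…,n}, and let f be a continuously differentiable function on an open neighborhood of B_∞(y, r₂). For z ∈ B_∞(y, r₂), let βᵢ(z) be the point obtained from z by replacing its i-th coordinate with yᵢ + r₂, and αᵢ(z) the point obtained by replacing the i-th coordinate with yᵢ − r₂; set g̃ᵢ(z) = (f(βᵢ(z)) − f(αᵢ(z)))/(2r₂). Let gᵢ be the average of ∂f/∂xᵢ over B_∞(y, r₂). Then E_{z} |g̃ᵢ(z) − gᵢ| ≤ E_{z} |∂f/∂xᵢ(z) − gᵢ|, where z is uniformly distributed on B_∞(y, r₂). -/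
open MeasureTheory

/-- The closed `ℓ∞`-ball of radius `r` around `y` in `ℝⁿ`. -/
def Binf {n : ℕ} (y : EuclideanSpace ℝ (Fin n)) (r : ℝ) : Set (EuclideanSpace ℝ (Fin n)) :=
  {z | ∀ i, |z i - y i| ≤ r}

noncomputable def sIota {m : ℕ} (i : Fin (m+1)) (t : ℝ) (w : Fin m → ℝ) :
    EuclideanSpace ℝ (Fin (m+1)) :=
  (WithLp.equiv 2 _).symm (i.insertNth t w)

noncomputable def sEe {m : ℕ} (i : Fin (m+1)) :
    EuclideanSpace ℝ (Fin (m+1)) ≃ᵐ ℝ × (Fin m → ℝ) :=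
  (MeasurableEquiv.toLp 2 (Fin (m+1) → ℝ)).symm.trans
    (MeasurableEquiv.piFinSuccAbove (fun _ => ℝ) i)

lemma sEe_mp {m : ℕ} (i : Fin (m+1)) :
    MeasurePreserving (sEe i) volume (volume : Measure (ℝ × (Fin m → ℝ))) := by
  rw [Measure.volume_eq_prod]
  have h2 := measurePreserving_piFinSuccAbove (fun _ : Fin (m+1) => (volume : Measure ℝ)) i
  simp only [← volume_pi] at h2
  exact h2.comp (EuclideanSpace.volume_preserving_symm_measurableEquiv_toLp (Fin (m+1)))

lemma sIota_hasDerivAt {m : ℕ} (i : Fin (m+1)) (w : Fin m → ℝ) (t : ℝ) :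
    HasDerivAt (fun s => sIota i s w) (EuclideanSpace.single i (1:ℝ)) t := by
  have h : (fun s : ℝ => sIota i s w)
      = fun s => sIota i 0 w + s • EuclideanSpace.single i (1:ℝ) := by
    funext s
    ext j
    simp only [sIota, PiLp.add_apply, PiLp.smul_apply, WithLp.equiv_symm_apply, PiLp.toLp_apply, smul_eq_mul]
    by_cases h : j = i
    · subst h; simp [Fin.insertNth_apply_same, EuclideanSpace.single_apply]
    · obtain ⟨k, rfl⟩ := Fin.exists_succAbove_eq h
      simp [Fin.insertNth_apply_succAbove, EuclideanSpace.single_apply, (Fin.succAbove_ne i k)]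
  rw [h]
  simpa using ((hasDerivAt_id t).smul_const (EuclideanSpace.single i (1:ℝ))).const_add (sIota i 0 w)

lemma sIota_update {m : ℕ} (i : Fin (m+1)) (t : ℝ) (w : Fin m → ℝ) (c : ℝ) :
    Function.update (sIota i t w) i c = sIota i c w := by
  funext j
  show Function.update (i.insertNth (α := fun _ => ℝ) t w) i c j
    = i.insertNth (α := fun _ => ℝ) c w j
  rw [Fin.update_insertNth]

lemma sIota_continuous {m : ℕ} (i : Fin (m+1)) :
    Continuous fun p : ℝ × (Fin m → ℝ) => sIota i p.1 p.2 := by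
  apply Continuous.comp (PiLp.continuous_toLp _ _)
  apply continuous_pi
  intro j
  by_cases h : j = i
  · subst h
    simpa only [Fin.insertNth_apply_same] using
      (continuous_fst : Continuous fun p : ℝ × (Fin m → ℝ) => p.1)
  · obtain ⟨k, rfl⟩ := Fin.exists_succAbove_eq h
    simpa only [Fin.insertNth_apply_succAbove, Function.comp_def] using
      ((continuous_apply k).comp (continuous_snd : Continuous fun p : ℝ × (Fin m → ℝ) => p.2))

/-- Let `f` be continuously differentiable on an open neighborhood of
`B_∞(y, r₂)`, let `g̃ᵢ(z) = (f(βᵢ(z)) − f(αᵢ(z)))/(2r₂)` where `βᵢ(z)` (resp. `αᵢ(z)`) is `z`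
with its `i`-th coordinate replaced by `yᵢ + r₂` (resp. `yᵢ − r₂`), and let `gᵢ` be the
average of `∂f/∂xᵢ` over `B_∞(y, r₂)`. Then, for `z` uniform on `B_∞(y, r₂)`,
`E_z |g̃ᵢ(z) − gᵢ| ≤ E_z |∂f/∂xᵢ(z) − gᵢ|`. -/
theorem stmt5 {n : ℕ} (hn : 1 ≤ n) (r₂ : ℝ) (hr₂ : 0 < r₂)
    (y : EuclideanSpace ℝ (Fin n)) (i : Fin n) (f : EuclideanSpace ℝ (Fin n) → ℝ)
    (U : Set (EuclideanSpace ℝ (Fin n))) (hU : IsOpen U) (hBU : Binf y r₂ ⊆ U)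
    (hf : ContDiffOn ℝ 1 f U)
    (gi : ℝ) (hgi : gi = ((2 * r₂) ^ n)⁻¹ * ∫ z in Binf y r₂, gradient f z i) :
    ((2 * r₂) ^ n)⁻¹ *
        ∫ z in Binf y r₂,
          |(f (WithLp.toLp 2 (Function.update z i (y i + r₂))) - f (WithLp.toLp 2 (Function.update z i (y i - r₂)))) / (2 * r₂)
            - gi|
      ≤ ((2 * r₂) ^ n)⁻¹ * ∫ z in Binf y r₂, |gradient f z i - gi| := by
  clear hgi
  obtain ⟨m, rfl⟩ : ∃ m, n = m + 1 := ⟨n - 1, by omega⟩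
  set a : ℝ := y i - r₂ with ha
  set b : ℝ := y i + r₂ with hb
  have hab : a ≤ b := by rw [ha, hb]; linarith
  set Box' : Set (Fin m → ℝ) :=
    Set.univ.pi fun j : Fin m => Set.Icc (y (i.succAbove j) - r₂) (y (i.succAbove j) + r₂)
    with hBox'
  set T : Set (ℝ × (Fin m → ℝ)) := Set.Icc a b ×ˢ Box' with hT
  -- preimage identification
  have hpre : (sEe i) ⁻¹' T = Binf y r₂ := by
    ext z
    have hz : sEe i z = (z i, fun j => z (i.succAbove j)) := rfl
    simp only [Set.mem_preimage, hz, hT, hBox', Set.mem_prod, Set.mem_pi, Set.mem_univ,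
      forall_const, Set.mem_Icc, Binf, Set.mem_setOf_eq, true_implies, ha, hb]
    rw [← Fin.forall_iff_succAbove i (P := fun j => y j - r₂ ≤ z j ∧ z j ≤ y j + r₂)]
    exact forall_congr' fun j => by
      rw [abs_le]; constructor <;> intro h <;> constructor <;> linarith [h.1, h.2]
  have hmemB : ∀ p : ℝ × (Fin m → ℝ), p ∈ T → sIota i p.1 p.2 ∈ Binf y r₂ := by
    intro p hp
    rw [← hpre]
    show sEe i ((sEe i).symm p) ∈ T
    rw [(sEe i).apply_symm_apply]; exact hp
  -- transfer of integrals
  have transfer : ∀ F : EuclideanSpace ℝ (Fin (m+1)) → ℝ,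
      ∫ z in Binf y r₂, F z = ∫ p in T, F (sIota i p.1 p.2) := by
    intro F
    have h := (sEe_mp i).setIntegral_preimage_emb (sEe i).measurableEmbedding
      (fun p => F (sIota i p.1 p.2)) T
    simp only [show ∀ z, sIota i ((sEe i) z).1 ((sEe i) z).2 = z from
      fun z => (sEe i).symm_apply_apply z, hpre] at h
    exact h
  -- splitting the product integral
  have hBox'm : MeasurableSet Box' := MeasurableSet.univ_pi fun j => measurableSet_Icc
  have split : ∀ G : ℝ × (Fin m → ℝ) → ℝ, IntegrableOn G T volume →
      ∫ p in T, G p = ∫ w in Box', ∫ t in Set.Icc a b, G (t, w) := by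
    intro G hG
    have hG' : Integrable G ((volume.restrict (Set.Icc a b)).prod (volume.restrict Box')) := by
      rw [Measure.prod_restrict, ← Measure.volume_eq_prod]; exact hG
    rw [hT, show (volume : Measure (ℝ × (Fin m → ℝ))) = Measure.prod volume volume from
      Measure.volume_eq_prod _ _, ← Measure.prod_restrict]
    exact integral_prod_symm G hG'
  -- compactness and continuity facts
  have hTc : IsCompact T := isCompact_Icc.prod (isCompact_univ_pi fun j => isCompact_Icc)
  have hfc : ContinuousOn f U := hf.continuousOn
  have hD : ∀ z : EuclideanSpace ℝ (Fin (m+1)),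
      gradient f z i = fderiv ℝ f z (EuclideanSpace.single i 1) := by
    intro z
    have h1 : (inner (𝕜 := ℝ) (gradient f z) (EuclideanSpace.single i (1:ℝ)))
        = fderiv ℝ f z (EuclideanSpace.single i 1) := by
      rw [gradient]; exact InnerProductSpace.toDual_symm_apply
    rw [← h1, EuclideanSpace.inner_single_right]; simp
  have hDc : ContinuousOn (fun z => gradient f z i) U := by
    have h2 : ContinuousOn (fun z => fderiv ℝ f z (EuclideanSpace.single i (1:ℝ))) U :=
      (hf.continuousOn_fderiv_of_isOpen hU le_rfl).clm_apply continuousOn_const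
    simpa only [hD] using h2
  have hpairc := sIota_continuous i
  -- integrability of the two integrands on T
  have hIntR : IntegrableOn (fun p : ℝ × (Fin m → ℝ) => |gradient f (sIota i p.1 p.2) i - gi|)
      T volume := by
    apply ContinuousOn.integrableOn_compact hTc
    exact (((hDc.comp hpairc.continuousOn) fun p hp => hBU (hmemB p hp)).sub
      continuousOn_const).abs
  have hbT : ∀ p : ℝ × (Fin m → ℝ), p ∈ T → (b, p.2) ∈ T := by
    intro p hp; exact ⟨⟨hab, le_rfl⟩, hp.2⟩
  have haT : ∀ p : ℝ × (Fin m → ℝ), p ∈ T → (a, p.2) ∈ T := by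
    intro p hp; exact ⟨⟨le_rfl, hab⟩, hp.2⟩
  have hcb : Continuous fun p : ℝ × (Fin m → ℝ) => sIota i b p.2 :=
    hpairc.comp (continuous_const.prodMk continuous_snd)
  have hca : Continuous fun p : ℝ × (Fin m → ℝ) => sIota i a p.2 :=
    hpairc.comp (continuous_const.prodMk continuous_snd)
  have hIntL : IntegrableOn
      (fun p : ℝ × (Fin m → ℝ) => |(f (sIota i b p.2) - f (sIota i a p.2)) / (2*r₂) - gi|)
      T volume := by
    apply ContinuousOn.integrableOn_compact hTc
    have h1 : ContinuousOn (fun p : ℝ × (Fin m → ℝ) => f (sIota i b p.2)) T :=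
      (hfc.comp hcb.continuousOn) fun p hp => hBU (hmemB (b, p.2) (hbT p hp))
    have h2 : ContinuousOn (fun p : ℝ × (Fin m → ℝ) => f (sIota i a p.2)) T :=
      (hfc.comp hca.continuousOn) fun p hp => hBU (hmemB (a, p.2) (haT p hp))
    exact (((h1.sub h2).div_const _).sub continuousOn_const).abs
  -- the key fiberwise inequality
  have key : ∀ w ∈ Box',
      (∫ t in Set.Icc a b, |(f (sIota i b w) - f (sIota i a w)) / (2*r₂) - gi|)
        ≤ ∫ t in Set.Icc a b, |gradient f (sIota i t w) i - gi| := by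
    intro w hw
    have hmem : ∀ t ∈ Set.Icc a b, sIota i t w ∈ Binf y r₂ := fun t ht => hmemB (t, w) ⟨ht, hw⟩
    have hcurve : Continuous fun t : ℝ => sIota i t w :=
      hpairc.comp (continuous_id.prodMk continuous_const)
    have hDIcont : ContinuousOn (fun t => gradient f (sIota i t w) i) (Set.Icc a b) :=
      (hDc.comp hcurve.continuousOn) fun t ht => hBU (hmem t ht)
    have hInt_t : IntervalIntegrable (fun t => gradient f (sIota i t w) i) volume a b := by
      apply ContinuousOn.intervalIntegrable
      rwa [Set.uIcc_of_le hab]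
    have hderiv : ∀ t ∈ Set.uIcc a b,
        HasDerivAt (fun s => f (sIota i s w)) (gradient f (sIota i t w) i) t := by
      intro t ht
      rw [Set.uIcc_of_le hab] at ht
      have hdf : DifferentiableAt ℝ f (sIota i t w) :=
        (hf.differentiableOn one_ne_zero).differentiableAt (hU.mem_nhds (hBU (hmem t ht)))
      have h := hdf.hasFDerivAt.comp_hasDerivAt t (sIota_hasDerivAt i w t)
      rw [hD]; exact h
    have hFTC := intervalIntegral.integral_eq_sub_of_hasDerivAt hderiv hInt_t
    have hba : b - a = 2 * r₂ := by rw [ha, hb]; ring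
    have h2r : (0:ℝ) < 2 * r₂ := by linarith
    -- compute the LHS
    rw [setIntegral_const, Real.volume_real_Icc_of_le hab, smul_eq_mul, hba]
    have hsum : f (sIota i b w) - f (sIota i a w) - (2*r₂)*gi
        = ∫ t in a..b, (gradient f (sIota i t w) i - gi) := by
      rw [intervalIntegral.integral_sub hInt_t intervalIntegrable_const, hFTC,
        intervalIntegral.integral_const, smul_eq_mul, hba]
    have hXeq : (2*r₂) * |(f (sIota i b w) - f (sIota i a w)) / (2*r₂) - gi|
        = |∫ t in a..b, (gradient f (sIota i t w) i - gi)| := by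
      rw [← hsum, show (f (sIota i b w) - f (sIota i a w)) / (2*r₂) - gi
          = (f (sIota i b w) - f (sIota i a w) - (2*r₂)*gi) / (2*r₂) by field_simp,
        abs_div, abs_of_pos h2r, mul_comm, div_mul_cancel₀ _ (ne_of_gt h2r)]
    rw [hXeq]
    calc |∫ t in a..b, (gradient f (sIota i t w) i - gi)|
        ≤ ∫ t in a..b, |gradient f (sIota i t w) i - gi| :=
          intervalIntegral.abs_integral_le_integral_abs hab
      _ = ∫ t in Set.Icc a b, |gradient f (sIota i t w) i - gi| := by
          rw [intervalIntegral.integral_of_le hab, ← integral_Icc_eq_integral_Ioc]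
  -- outer integrabilities
  have hOL : IntegrableOn
      (fun w => ∫ t in Set.Icc a b, |(f (sIota i b w) - f (sIota i a w)) / (2*r₂) - gi|)
      Box' volume := by
    have h := hIntL
    rw [IntegrableOn, hT, Measure.volume_eq_prod, ← Measure.prod_restrict] at h
    exact h.integral_prod_right
  have hOR : IntegrableOn
      (fun w => ∫ t in Set.Icc a b, |gradient f (sIota i t w) i - gi|)
      Box' volume := by
    have h := hIntR
    rw [IntegrableOn, hT, Measure.volume_eq_prod, ← Measure.prod_restrict] at h
    exact h.integral_prod_right
  -- assemble
  apply mul_le_mul_of_nonneg_left _ (inv_nonneg.2 (pow_nonneg (by linarith) (m+1)))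
  have hLrw : ∀ p : ℝ × (Fin m → ℝ),
      |(f (WithLp.toLp 2 (Function.update (sIota i p.1 p.2) i (y i + r₂)))
          - f (WithLp.toLp 2 (Function.update (sIota i p.1 p.2) i (y i - r₂)))) / (2 * r₂) - gi|
        = |(f (sIota i b p.2) - f (sIota i a p.2)) / (2*r₂) - gi| := by
    intro p; rw [← hb, ← ha, sIota_update, sIota_update, WithLp.toLp_ofLp, WithLp.toLp_ofLp]
  calc ∫ z in Binf y r₂,
        |(f (WithLp.toLp 2 (Function.update z i (y i + r₂))) - f (WithLp.toLp 2 (Function.update z i (y i - r₂)))) / (2 * r₂) - gi|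
      = ∫ p in T, |(f (sIota i b p.2) - f (sIota i a p.2)) / (2*r₂) - gi| := by
        rw [transfer (fun z =>
          |(f (WithLp.toLp 2 (Function.update z i (y i + r₂))) - f (WithLp.toLp 2 (Function.update z i (y i - r₂)))) / (2 * r₂)
            - gi|)]
        exact integral_congr_ae (Filter.Eventually.of_forall fun p => hLrw p)
    _ = ∫ w in Box', ∫ t in Set.Icc a b,
          |(f (sIota i b w) - f (sIota i a w)) / (2*r₂) - gi| := split _ hIntL
    _ ≤ ∫ w in Box', ∫ t in Set.Icc a b, |gradient f (sIota i t w) i - gi| :=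
        setIntegral_mono_on hOL hOR hBox'm key
    _ = ∫ p in T, |gradient f (sIota i p.1 p.2) i - gi| := (split _ hIntR).symm
    _ = ∫ z in Binf y r₂, |gradient f z i - gi| :=
        (transfer (fun z => |gradient f z i - gi|)).symm
end

section
/- Let n ≥ 1, r₂ > 0, y ∈ ℝⁿ, and let f be a continuously differentiable function on an open neighborhood of B_∞(y, r₂). For z ∈ B_∞(y, r₂) and each i, let g̃ᵢ(z) = (f(βᵢ(z)) − f(αᵢ(z)))/(2r₂), where βᵢ(z) (resp. αᵢ(z)) is z with i-th coordinate replaced by yᵢ + r₂ (resp. yᵢ − r₂), and let g̃(z) = (g̃₁(z),…,g̃ₙ(z)). Let g(y) ∈ ℝⁿ be the average of ∇f over B_∞(y, r₂). Then E_{z}‖g̃(z) − ∇f(z)‖₁ ≤ 2 E_{z}‖∇f(z) − g(y)‖₁, where z is uniformly distributed on B_∞(y, r₂). -/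
open MeasureTheory Set
open scoped ENNReal

lemma pi_fubini {m : ℕ} (i : Fin (m+1)) (c d : Fin (m+1) → ℝ)
    (h : (Fin (m+1) → ℝ) → ℝ≥0∞) (hh : Measurable h) :
    ∫⁻ z in Set.univ.pi (fun j => Set.Icc (c j) (d j)),
        ∫⁻ t in Set.Icc (c i) (d i), h (Function.update z i t) ∂volume ∂volume
      = volume (Set.Icc (c i) (d i)) *
          ∫⁻ z in Set.univ.pi (fun j => Set.Icc (c j) (d j)), h z := by
  set e := MeasurableEquiv.piFinSuccAbove (fun _ : Fin (m+1) => ℝ) i with he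
  have hmp := volume_preserving_piFinSuccAbove (fun _ : Fin (m+1) => ℝ) i
  have hmap : (volume : Measure (Fin (m+1) → ℝ)) = Measure.map e.symm volume :=
    ((hmp.symm e).map_eq).symm
  have hBm : MeasurableSet (Set.univ.pi (fun j => Set.Icc (c j) (d j))) :=
    MeasurableSet.univ_pi fun j => measurableSet_Icc
  have hupdm : Measurable fun p : (Fin (m+1) → ℝ) × ℝ => Function.update p.1 i p.2 :=
    measurable_update'
  have houter : Measurable fun z => ∫⁻ t in Set.Icc (c i) (d i), h (Function.update z i t) :=
    Measurable.lintegral_prod_right' (hh.comp hupdm)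
  have hpre : ⇑e.symm ⁻¹' (Set.univ.pi fun j => Set.Icc (c j) (d j)) =
      Set.Icc (c i) (d i) ×ˢ Set.univ.pi (fun j => Set.Icc (c (i.succAbove j)) (d (i.succAbove j))) := by
    ext ⟨t, w⟩
    simp only [he, Set.mem_preimage, MeasurableEquiv.piFinSuccAbove_symm_apply, Set.mem_pi,
      Set.mem_univ, forall_true_left, Set.mem_prod, Set.mem_Icc, Fin.forall_iff_succAbove i, Fin.insertNthEquiv_apply,
      Fin.insertNth_apply_same, Fin.insertNth_apply_succAbove]
  rw [hmap, setLIntegral_map hBm houter e.symm.measurable,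
    setLIntegral_map hBm hh e.symm.measurable, hpre]
  rw [Measure.volume_eq_prod, ← Measure.prod_restrict]
  have hm2 : Measurable fun p : ℝ × (Fin m → ℝ) => h (e.symm p) := hh.comp e.symm.measurable
  have key : ∀ (s t : ℝ) (w : Fin m → ℝ),
      Function.update (i.insertNth s w : Fin (m+1) → ℝ) i t = i.insertNth t w := by
    intro s t w; ext j
    rcases eq_or_ne j i with rfl | hj
    · simp
    · rw [Function.update_of_ne hj]
      obtain ⟨k, rfl⟩ := Fin.exists_succAbove_eq hj
      simp
  have hesymm : ∀ p : ℝ × (Fin m → ℝ), ⇑e.symm p = i.insertNth p.1 p.2 := fun p => by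
    cases p; rfl
  have hA : AEMeasurable (fun x : ℝ × (Fin m → ℝ) =>
      ∫⁻ t in Set.Icc (c i) (d i), h (Function.update (e.symm x) i t))
      ((volume.restrict (Set.Icc (c i) (d i))).prod (volume.restrict
        (Set.univ.pi fun j => Set.Icc (c (i.succAbove j)) (d (i.succAbove j))))) :=
    (houter.comp e.symm.measurable).aemeasurable
  rw [lintegral_prod _ hA, lintegral_prod _ hm2.aemeasurable]
  simp_rw [hesymm, key]
  rw [setLIntegral_const]
  have hswap := lintegral_lintegral_swap (μ := volume.restrict (Set.univ.pi
      (fun j => Set.Icc (c (i.succAbove j)) (d (i.succAbove j)))))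
    (ν := volume.restrict (Set.Icc (c i) (d i)))
    (f := fun w t => h (i.insertNth t w)) ?_
  · rw [hswap, mul_comm]
  · have hmeas : Measurable fun p : (Fin m → ℝ) × ℝ => h (i.insertNth p.2 p.1) := by
      have h2 := hh.comp (e.symm.measurable.comp measurable_swap)
      have : (fun p : (Fin m → ℝ) × ℝ => h (i.insertNth p.2 p.1))
          = h ∘ (⇑e.symm ∘ Prod.swap) := by
        funext p; simp [Function.comp, hesymm]
      rw [this]; exact h2
    exact hmeas.aemeasurable


lemma contUpdate {n : ℕ} (i : Fin n) :
    Continuous fun p : EuclideanSpace ℝ (Fin n) × ℝ =>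
      (WithLp.toLp 2 (Function.update p.1 i p.2) : EuclideanSpace ℝ (Fin n)) := by
  have hrw : (fun p : EuclideanSpace ℝ (Fin n) × ℝ =>
      (WithLp.toLp 2 (Function.update p.1 i p.2) : EuclideanSpace ℝ (Fin n)))
      = fun p => p.1 + (p.2 - p.1 i) • (EuclideanSpace.single i (1:ℝ)) := by
    funext p; ext j
    rcases eq_or_ne j i with rfl | hj
    · rw [PiLp.add_apply, PiLp.smul_apply, EuclideanSpace.single_apply, if_pos rfl,
        PiLp.toLp_apply, Function.update_self, smul_eq_mul]
      ring
    · rw [PiLp.add_apply, PiLp.smul_apply, EuclideanSpace.single_apply, if_neg hj,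
        PiLp.toLp_apply, Function.update_of_ne hj, smul_eq_mul]
      ring
  rw [hrw]
  have hev : Continuous fun z : EuclideanSpace ℝ (Fin n) => z i :=
    (EuclideanSpace.proj (𝕜 := ℝ) i).continuous
  fun_prop

lemma isCompact_Binf {n : ℕ} (y : EuclideanSpace ℝ (Fin n)) (r : ℝ) :
    IsCompact (Binf y r) := by
  have himg : Binf y r = ⇑(PiLp.continuousLinearEquiv 2 ℝ (fun _ : Fin n => ℝ)).symm ''
      (Set.univ.pi fun j => Set.Icc (y j - r) (y j + r)) := by
    ext z
    constructor
    · intro hz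
      refine ⟨fun j => z j, fun j _ => ?_, rfl⟩
      have := hz j
      rw [abs_le] at this
      exact Set.mem_Icc.2 ⟨by linarith [this.1], by linarith [this.2]⟩
    · rintro ⟨w, hw, rfl⟩ j
      have h2 := hw j (Set.mem_univ j)
      rw [Set.mem_Icc] at h2
      have hcoe : (PiLp.continuousLinearEquiv 2 ℝ fun _ : Fin n => ℝ).symm w j = w j := rfl
      rw [abs_le, hcoe]
      exact ⟨by linarith [h2.1], by linarith [h2.2]⟩
  rw [himg]
  exact ((isCompact_univ_pi fun j => isCompact_Icc).image
    (PiLp.continuousLinearEquiv 2 ℝ (fun _ : Fin n => ℝ)).symm.continuous)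

lemma measurableSet_Binf {n : ℕ} (y : EuclideanSpace ℝ (Fin n)) (r : ℝ) :
    MeasurableSet (Binf y r) :=
  (isCompact_Binf y r).isClosed.measurableSet

lemma E_fubini {m : ℕ} (y : EuclideanSpace ℝ (Fin (m+1))) (r : ℝ) (i : Fin (m+1))
    (h : EuclideanSpace ℝ (Fin (m+1)) → ℝ≥0∞) (hh : Measurable h) :
    ∫⁻ z in Binf y r, ∫⁻ t in Set.Icc (y i - r) (y i + r),
        h (WithLp.toLp 2 (Function.update z i t)) ∂volume ∂volume
      = volume (Set.Icc (y i - r) (y i + r)) * ∫⁻ z in Binf y r, h z := by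
  set e := (MeasurableEquiv.toLp 2 (Fin (m+1) → ℝ)).symm with he
  have hmp := EuclideanSpace.volume_preserving_symm_measurableEquiv_toLp (Fin (m+1))
  have hmap : (volume : Measure (EuclideanSpace ℝ (Fin (m+1)))) = Measure.map (⇑e.symm) volume :=
    ((hmp.symm e).map_eq).symm
  have hBm : MeasurableSet (Binf y r) := measurableSet_Binf y r
  have houter : Measurable fun z : EuclideanSpace ℝ (Fin (m+1)) =>
      ∫⁻ t in Set.Icc (y i - r) (y i + r), h (WithLp.toLp 2 (Function.update z i t)) :=
    Measurable.lintegral_prod_right' (hh.comp (contUpdate i).measurable)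
  rw [hmap, setLIntegral_map hBm houter e.symm.measurable,
    setLIntegral_map hBm hh e.symm.measurable]
  have hpre : ⇑e.symm ⁻¹' Binf y r = Set.univ.pi fun j => Set.Icc (y j - r) (y j + r) := by
    ext w
    simp only [Set.mem_preimage, Binf, Set.mem_setOf_eq, he,
      MeasurableEquiv.symm_symm, MeasurableEquiv.coe_toLp, PiLp.toLp_apply, Set.mem_pi,
      Set.mem_univ, forall_true_left, Set.mem_Icc, abs_le]
    exact forall_congr' fun j => by constructor <;> intro h1 <;>
      exact ⟨by linarith [h1.1], by linarith [h1.2]⟩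
  have hupd : ∀ (w : Fin (m+1) → ℝ) (t : ℝ),
      h (WithLp.toLp 2 (Function.update (e.symm w) i t)) = (h ∘ ⇑e.symm) (Function.update w i t) := fun w t => rfl
  rw [hpre]
  simp_rw [hupd]
  exact pi_fubini i (fun j => y j - r) (fun j => y j + r) (h ∘ ⇑e.symm)
    (hh.comp e.symm.measurable)

/-- Let `f` be continuously differentiable on an open neighborhood of
`B_∞(y, r₂)`, and for each `i` let `g̃ᵢ(z) = (f(βᵢ(z)) − f(αᵢ(z)))/(2r₂)` where `βᵢ(z)`
(resp. `αᵢ(z)`) is `z` with its `i`-th coordinate replaced by `yᵢ + r₂` (resp. `yᵢ − r₂`).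
Let `g(y)` be the average of `∇f` over `B_∞(y, r₂)`. Then, for `z` uniform on `B_∞(y, r₂)`,
`E_z ‖g̃(z) − ∇f(z)‖₁ ≤ 2 E_z ‖∇f(z) − g(y)‖₁`. -/
theorem stmt6 {n : ℕ} (hn : 1 ≤ n) (r₂ : ℝ) (hr₂ : 0 < r₂)
    (y : EuclideanSpace ℝ (Fin n)) (f : EuclideanSpace ℝ (Fin n) → ℝ)
    (U : Set (EuclideanSpace ℝ (Fin n))) (hU : IsOpen U) (hBU : Binf y r₂ ⊆ U)
    (hf : ContDiffOn ℝ 1 f U)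
    (gy : EuclideanSpace ℝ (Fin n))
    (hgy : gy = ((2 * r₂) ^ n)⁻¹ • ∫ z in Binf y r₂, gradient f z) :
    ((2 * r₂) ^ n)⁻¹ *
        ∫ z in Binf y r₂,
          ∑ i, |(f (WithLp.toLp 2 (Function.update z i (y i + r₂))) - f (WithLp.toLp 2 (Function.update z i (y i - r₂))))
                  / (2 * r₂) - gradient f z i|
      ≤ 2 * (((2 * r₂) ^ n)⁻¹ * ∫ z in Binf y r₂, ∑ i, |gradient f z i - gy i|) := by
  clear hgy
  obtain ⟨m, rfl⟩ : ∃ m, n = m + 1 := ⟨n - 1, (Nat.succ_pred_eq_of_pos hn).symm⟩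
  set B : Set (EuclideanSpace ℝ (Fin (m + 1))) := Binf y r₂ with hBdef
  set G : EuclideanSpace ℝ (Fin (m + 1)) → EuclideanSpace ℝ (Fin (m + 1)) := gradient f
    with hGdef
  have hBm : MeasurableSet B := measurableSet_Binf y r₂
  have hBcomp : IsCompact B := isCompact_Binf y r₂
  have hBvol : volume B < ⊤ := hBcomp.measure_lt_top
  -- continuity of the gradient on U
  have hGc : ContinuousOn G U := by
    have hfd : ContinuousOn (fderiv ℝ f) U := hf.continuousOn_fderiv_of_isOpen hU le_rfl
    exact (InnerProductSpace.toDual ℝ (EuclideanSpace ℝ (Fin (m+1)))).symm.continuous.comp_continuousOn hfd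
  have hGic : ∀ i : Fin (m+1), ContinuousOn (fun z => G z i) U := fun i =>
    (EuclideanSpace.proj (𝕜 := ℝ) i).continuous.comp_continuousOn hGc
  -- measurability of the gradient
  have hGm : Measurable G := by
    have : Measurable (fderiv ℝ f) := measurable_fderiv ℝ f
    exact (InnerProductSpace.toDual ℝ (EuclideanSpace ℝ (Fin (m+1)))).symm.continuous.measurable.comp this
  have hGim : ∀ i : Fin (m+1), Measurable (fun z => G z i) := fun i =>
    (EuclideanSpace.proj (𝕜 := ℝ) i).continuous.measurable.comp hGm
  -- update maps
  have hupc : ∀ (i : Fin (m+1)) (t : ℝ), Continuous fun z : EuclideanSpace ℝ (Fin (m+1)) => WithLp.toLp 2 (Function.update z i t) :=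
    fun i t => (contUpdate i).comp (continuous_id.prodMk continuous_const)
  have hupc' : ∀ (i : Fin (m+1)) (z : EuclideanSpace ℝ (Fin (m+1))), Continuous fun t : ℝ => WithLp.toLp 2 (Function.update z i t) :=
    fun i z => (contUpdate i).comp (continuous_const.prodMk continuous_id)
  have hupd_mem : ∀ (i : Fin (m+1)) (z : EuclideanSpace ℝ (Fin (m+1))), z ∈ B → ∀ t : ℝ,
      t ∈ Set.Icc (y i - r₂) (y i + r₂) → WithLp.toLp 2 (Function.update z i t) ∈ B := by
    intro i z hz t ht j
    rcases eq_or_ne j i with rfl | hj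
    · rw [PiLp.toLp_apply, Function.update_self, abs_le]
      exact ⟨by linarith [ht.1], by linarith [ht.2]⟩
    · rw [PiLp.toLp_apply, Function.update_of_ne hj]
      exact hz j
  have hab : ∀ i : Fin (m+1), y i - r₂ ≤ y i + r₂ := fun i => by linarith
  -- derivative of f along coordinate i
  have hgrad_comp : ∀ (i : Fin (m+1)) (x : EuclideanSpace ℝ (Fin (m+1))), DifferentiableAt ℝ f x →
      fderiv ℝ f x (EuclideanSpace.single i (1:ℝ)) = G x i := by
    intro i x hx
    have h1 : HasFDerivAt f (InnerProductSpace.toDual ℝ (EuclideanSpace ℝ (Fin (m+1))) (gradient f x)) x :=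
      hx.hasGradientAt.hasFDerivAt
    rw [h1.fderiv]
    have : InnerProductSpace.toDual ℝ (EuclideanSpace ℝ (Fin (m+1))) (gradient f x) (EuclideanSpace.single i (1:ℝ))
        = @inner ℝ _ _ (gradient f x) (EuclideanSpace.single i (1:ℝ)) := rfl
    rw [this, EuclideanSpace.inner_single_right]
    simp [hGdef]
  have hFTC : ∀ (i : Fin (m+1)) (z : EuclideanSpace ℝ (Fin (m+1))), z ∈ B →
      f (WithLp.toLp 2 (Function.update z i (y i + r₂))) - f (WithLp.toLp 2 (Function.update z i (y i - r₂)))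
        = ∫ t in (y i - r₂)..(y i + r₂), G (WithLp.toLp 2 (Function.update z i t)) i := by
    intro i z hz
    have hderiv : ∀ t ∈ Set.uIcc (y i - r₂) (y i + r₂),
        HasDerivAt (fun t => f (WithLp.toLp 2 (Function.update z i t))) (G (WithLp.toLp 2 (Function.update z i t)) i) t := by
      intro t ht
      rw [Set.uIcc_of_le (hab i)] at ht
      have hmem : WithLp.toLp 2 (Function.update z i t) ∈ B := hupd_mem i z hz t ht
      have hdf : DifferentiableAt ℝ f (WithLp.toLp 2 (Function.update z i t)) :=
        (hf.differentiableOn one_ne_zero).differentiableAt (hU.mem_nhds (hBU hmem))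
      have hφ : HasDerivAt (F := EuclideanSpace ℝ (Fin (m+1)))
          (fun t : ℝ => (WithLp.toLp 2 (Function.update z i t) : EuclideanSpace ℝ (Fin (m+1))))
          (EuclideanSpace.single i (1:ℝ)) t := by
        have hrw : (fun t : ℝ => (WithLp.toLp 2 (Function.update z i t) : EuclideanSpace ℝ (Fin (m+1))))
            = fun t => z + (t - z i) • EuclideanSpace.single i (1:ℝ) := by
          funext s; ext j
          rcases eq_or_ne j i with rfl | hj
          · rw [PiLp.add_apply, PiLp.smul_apply, EuclideanSpace.single_apply, if_pos rfl,
              PiLp.toLp_apply, Function.update_self, smul_eq_mul]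
            ring
          · rw [PiLp.add_apply, PiLp.smul_apply, EuclideanSpace.single_apply, if_neg hj,
              PiLp.toLp_apply, Function.update_of_ne hj, smul_eq_mul]
            ring
        rw [hrw]
        have h1 : HasDerivAt (fun s : ℝ => s - z i) 1 t := (hasDerivAt_id t).sub_const (z i)
        have h2 := (h1.smul_const (EuclideanSpace.single i (1:ℝ))).const_add z
        simpa using h2
      have := hdf.hasFDerivAt.comp_hasDerivAt t hφ
      rw [← hgrad_comp i _ hdf]
      exact this
    have hint : IntervalIntegrable (fun t => G (WithLp.toLp 2 (Function.update z i t)) i) volume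
        (y i - r₂) (y i + r₂) := by
      apply ContinuousOn.intervalIntegrable
      rw [Set.uIcc_of_le (hab i)]
      exact (hGic i).comp (hupc' i z).continuousOn
        (fun t ht => hBU (hupd_mem i z hz t ht))
    have := intervalIntegral.integral_eq_sub_of_hasDerivAt hderiv hint
    rw [this]
  -- pointwise bound
  have hptb : ∀ (i : Fin (m+1)) (z : EuclideanSpace ℝ (Fin (m+1))), z ∈ B →
      |(f (WithLp.toLp 2 (Function.update z i (y i + r₂))) - f (WithLp.toLp 2 (Function.update z i (y i - r₂)))) / (2 * r₂)
          - gy i|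
        ≤ (2 * r₂)⁻¹ * ∫ t in (y i - r₂)..(y i + r₂), |G (WithLp.toLp 2 (Function.update z i t)) i - gy i| := by
    intro i z hz
    have hint : IntervalIntegrable (fun t => G (WithLp.toLp 2 (Function.update z i t)) i) volume
        (y i - r₂) (y i + r₂) := by
      apply ContinuousOn.intervalIntegrable
      rw [Set.uIcc_of_le (hab i)]
      exact (hGic i).comp (hupc' i z).continuousOn
        (fun t ht => hBU (hupd_mem i z hz t ht))
    have hsub : ∫ t in (y i - r₂)..(y i + r₂), (G (WithLp.toLp 2 (Function.update z i t)) i - gy i)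
        = (f (WithLp.toLp 2 (Function.update z i (y i + r₂))) - f (WithLp.toLp 2 (Function.update z i (y i - r₂))))
          - (2 * r₂) * gy i := by
      rw [intervalIntegral.integral_sub hint (intervalIntegrable_const),
        intervalIntegral.integral_const, ← hFTC i z hz]
      have : y i + r₂ - (y i - r₂) = 2 * r₂ := by ring
      rw [this, smul_eq_mul]
    have habs : |∫ t in (y i - r₂)..(y i + r₂), (G (WithLp.toLp 2 (Function.update z i t)) i - gy i)|
        ≤ ∫ t in (y i - r₂)..(y i + r₂), |G (WithLp.toLp 2 (Function.update z i t)) i - gy i| :=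
      intervalIntegral.abs_integral_le_integral_abs (hab i)
    rw [hsub] at habs
    have h2r : (0:ℝ) < 2 * r₂ := by linarith
    have heq : (f (WithLp.toLp 2 (Function.update z i (y i + r₂))) - f (WithLp.toLp 2 (Function.update z i (y i - r₂))))
        / (2 * r₂) - gy i
        = (2 * r₂)⁻¹ * ((f (WithLp.toLp 2 (Function.update z i (y i + r₂)))
            - f (WithLp.toLp 2 (Function.update z i (y i - r₂)))) - (2 * r₂) * gy i) := by
      field_simp
    rw [heq, abs_mul, abs_of_pos (inv_pos.2 h2r)]
    exact mul_le_mul_of_nonneg_left habs (inv_pos.2 h2r).le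
  -- continuity of f on U
  have hfc : ContinuousOn f U := hf.continuousOn
  have hGicB : ∀ i : Fin (m+1), ContinuousOn (fun z => G z i) B :=
    fun i => (hGic i).mono hBU
  have hgtc : ∀ i : Fin (m+1), ContinuousOn (fun z : EuclideanSpace ℝ (Fin (m+1)) =>
      (f (WithLp.toLp 2 (Function.update z i (y i + r₂))) - f (WithLp.toLp 2 (Function.update z i (y i - r₂)))) / (2 * r₂)) B := by
    intro i
    apply ContinuousOn.div_const
    apply ContinuousOn.sub
    · exact hfc.comp (hupc i (y i + r₂)).continuousOn
        fun z hz => hBU (hupd_mem i z hz (y i + r₂) ⟨by linarith, le_rfl⟩)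
    · exact hfc.comp (hupc i (y i - r₂)).continuousOn
        fun z hz => hBU (hupd_mem i z hz (y i - r₂) ⟨le_rfl, by linarith⟩)
  -- per-coordinate inequality
  have hkey : ∀ i : Fin (m+1),
      (∫ z in B, |(f (WithLp.toLp 2 (Function.update z i (y i + r₂))) - f (WithLp.toLp 2 (Function.update z i (y i - r₂))))
          / (2 * r₂) - G z i|)
        ≤ 2 * ∫ z in B, |G z i - gy i| := by
    intro i
    have hqcU : ContinuousOn (fun z => |G z i - gy i|) U := ((hGic i).sub continuousOn_const).abs
    have hqc : ContinuousOn (fun z => |G z i - gy i|) B := hqcU.mono hBU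
    have hqm : Measurable fun z => |G z i - gy i| := ((hGim i).sub measurable_const).abs
    have hq'm : Measurable fun z => ENNReal.ofReal |G z i - gy i| := hqm.ennreal_ofReal
    have hgtae : AEMeasurable (fun z : EuclideanSpace ℝ (Fin (m+1)) =>
        (f (WithLp.toLp 2 (Function.update z i (y i + r₂))) - f (WithLp.toLp 2 (Function.update z i (y i - r₂)))) / (2 * r₂))
        (volume.restrict B) := (hgtc i).aemeasurable hBm
    set L1 := ∫⁻ z in B, ENNReal.ofReal
      |(f (WithLp.toLp 2 (Function.update z i (y i + r₂))) - f (WithLp.toLp 2 (Function.update z i (y i - r₂)))) / (2 * r₂)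
        - G z i| with hL1
    set L2 := ∫⁻ z in B, ENNReal.ofReal
      |(f (WithLp.toLp 2 (Function.update z i (y i + r₂))) - f (WithLp.toLp 2 (Function.update z i (y i - r₂)))) / (2 * r₂)
        - gy i| with hL2
    set L3 := ∫⁻ z in B, ENNReal.ofReal |G z i - gy i| with hL3
    obtain ⟨M, hM⟩ := hBcomp.exists_bound_of_continuousOn hqc
    have hL3top : L3 ≠ ⊤ := by
      have hle : L3 ≤ ENNReal.ofReal M * volume B := by
        have h1 : L3 ≤ ∫⁻ _ in B, ENNReal.ofReal M := by
          apply setLIntegral_mono measurable_const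
          intro z hz
          exact ENNReal.ofReal_le_ofReal (by
            have := hM z hz
            rwa [Real.norm_eq_abs, abs_abs] at this)
        rwa [setLIntegral_const] at h1
      exact ne_top_of_le_ne_top (ENNReal.mul_ne_top ENNReal.ofReal_ne_top hBvol.ne) hle
    have hstep1 : L1 ≤ L2 + L3 := by
      have hmono : L1 ≤ ∫⁻ z in B, (ENNReal.ofReal
          |(f (WithLp.toLp 2 (Function.update z i (y i + r₂))) - f (WithLp.toLp 2 (Function.update z i (y i - r₂)))) / (2 * r₂)
            - gy i| + ENNReal.ofReal |G z i - gy i|) := by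
        apply lintegral_mono_ae
        filter_upwards [ae_restrict_mem hBm] with z _
        rw [← ENNReal.ofReal_add (abs_nonneg _) (abs_nonneg _)]
        apply ENNReal.ofReal_le_ofReal
        calc |(f (WithLp.toLp 2 (Function.update z i (y i + r₂))) - f (WithLp.toLp 2 (Function.update z i (y i - r₂))))
              / (2 * r₂) - G z i|
            ≤ |(f (WithLp.toLp 2 (Function.update z i (y i + r₂))) - f (WithLp.toLp 2 (Function.update z i (y i - r₂))))
              / (2 * r₂) - gy i| + |gy i - G z i| := abs_sub_le _ _ _
          _ = |(f (WithLp.toLp 2 (Function.update z i (y i + r₂))) - f (WithLp.toLp 2 (Function.update z i (y i - r₂))))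
              / (2 * r₂) - gy i| + |G z i - gy i| := by rw [abs_sub_comm (gy i)]
      calc L1 ≤ _ := hmono
        _ = L2 + L3 := lintegral_add_right' _ hq'm.aemeasurable
    have hfub := E_fubini y r₂ i (fun z => ENNReal.ofReal |G z i - gy i|) hq'm
    have hIcc : volume (Set.Icc (y i - r₂) (y i + r₂)) = ENNReal.ofReal (2 * r₂) := by
      rw [Real.volume_Icc]
      congr 1
      ring
    have hstep2 : L2 ≤ L3 := by
      have hbd : ∀ z ∈ B, ENNReal.ofReal
          |(f (WithLp.toLp 2 (Function.update z i (y i + r₂))) - f (WithLp.toLp 2 (Function.update z i (y i - r₂)))) / (2 * r₂)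
            - gy i|
          ≤ ENNReal.ofReal (2*r₂)⁻¹ * ∫⁻ t in Set.Icc (y i - r₂) (y i + r₂),
              ENNReal.ofReal |G (WithLp.toLp 2 (Function.update z i t)) i - gy i| := by
        intro z hz
        have h1 := hptb i z hz
        have hcont : ContinuousOn (fun t => |G (WithLp.toLp 2 (Function.update z i t)) i - gy i|)
            (Set.Icc (y i - r₂) (y i + r₂)) :=
          (((hGic i).comp (hupc' i z).continuousOn
            (fun t ht => hBU (hupd_mem i z hz t ht))).sub continuousOn_const).abs
        have hinteg : IntegrableOn (fun t => |G (WithLp.toLp 2 (Function.update z i t)) i - gy i|)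
            (Set.Ioc (y i - r₂) (y i + r₂)) volume :=
          (hcont.integrableOn_compact isCompact_Icc).mono_set Set.Ioc_subset_Icc_self
        have hofreal : ENNReal.ofReal
            (∫ t in (y i - r₂)..(y i + r₂), |G (WithLp.toLp 2 (Function.update z i t)) i - gy i|)
            = ∫⁻ t in Set.Icc (y i - r₂) (y i + r₂),
                ENNReal.ofReal |G (WithLp.toLp 2 (Function.update z i t)) i - gy i| := by
          rw [intervalIntegral.integral_of_le (hab i),
            ofReal_integral_eq_lintegral_ofReal hinteg (ae_of_all _ fun t => abs_nonneg _)]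
          exact setLIntegral_congr Ioc_ae_eq_Icc
        have c1 : ENNReal.ofReal |(f (WithLp.toLp 2 (Function.update z i (y i + r₂))) - f (WithLp.toLp 2 (Function.update z i (y i - r₂)))) / (2 * r₂) - gy i| ≤ ENNReal.ofReal ((2*r₂)⁻¹ * ∫ t in (y i - r₂)..(y i + r₂), |G (WithLp.toLp 2 (Function.update z i t)) i - gy i|) :=
          ENNReal.ofReal_le_ofReal h1
        have c2 : ENNReal.ofReal ((2*r₂)⁻¹ * ∫ t in (y i - r₂)..(y i + r₂), |G (WithLp.toLp 2 (Function.update z i t)) i - gy i|) = ENNReal.ofReal (2*r₂)⁻¹ * ENNReal.ofReal (∫ t in (y i - r₂)..(y i + r₂), |G (WithLp.toLp 2 (Function.update z i t)) i - gy i|) :=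
          ENNReal.ofReal_mul (by positivity)
        rw [hofreal] at c2
        exact le_trans c1 (le_of_eq c2)
      calc L2 ≤ ∫⁻ z in B, ENNReal.ofReal (2*r₂)⁻¹ * ∫⁻ t in Set.Icc (y i - r₂) (y i + r₂),
              ENNReal.ofReal |G (WithLp.toLp 2 (Function.update z i t)) i - gy i| := by
            apply lintegral_mono_ae
            filter_upwards [ae_restrict_mem hBm] with z hz
            exact hbd z hz
        _ = ENNReal.ofReal (2*r₂)⁻¹ * ∫⁻ z in B, ∫⁻ t in Set.Icc (y i - r₂) (y i + r₂),
              ENNReal.ofReal |G (WithLp.toLp 2 (Function.update z i t)) i - gy i| :=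
            lintegral_const_mul' _ _ ENNReal.ofReal_ne_top
        _ = ENNReal.ofReal (2*r₂)⁻¹ * (ENNReal.ofReal (2 * r₂) * L3) := by
            rw [hfub, hIcc]
        _ = L3 := by
            rw [← mul_assoc, ← ENNReal.ofReal_mul (by positivity),
              inv_mul_cancel₀ (by positivity : (2*r₂) ≠ 0), ENNReal.ofReal_one, one_mul]
    have h1e : ∫ z in B, |(f (WithLp.toLp 2 (Function.update z i (y i + r₂)))
        - f (WithLp.toLp 2 (Function.update z i (y i - r₂)))) / (2 * r₂) - G z i| = L1.toReal := by
      rw [hL1]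
      exact integral_eq_lintegral_of_nonneg_ae (ae_of_all _ fun z => abs_nonneg _)
        (((hgtc i).sub (hGicB i)).abs.aestronglyMeasurable hBm)
    have h3e : ∫ z in B, |G z i - gy i| = L3.toReal := by
      rw [hL3]
      exact integral_eq_lintegral_of_nonneg_ae (ae_of_all _ fun z => abs_nonneg _)
        (hqc.aestronglyMeasurable hBm)
    rw [h1e, h3e]
    have h2L3top : (2:ℝ≥0∞) * L3 ≠ ⊤ := ENNReal.mul_ne_top (by norm_num) hL3top
    have hfin : L1 ≤ 2 * L3 := by
      calc L1 ≤ L2 + L3 := hstep1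
        _ ≤ L3 + L3 := add_le_add hstep2 le_rfl
        _ = 2 * L3 := (two_mul L3).symm
    have := ENNReal.toReal_mono h2L3top hfin
    rwa [ENNReal.toReal_mul, ENNReal.toReal_ofNat] at this
  -- integrability of summands
  have hint1 : ∀ i : Fin (m+1), IntegrableOn (fun z : EuclideanSpace ℝ (Fin (m+1)) =>
      |(f (WithLp.toLp 2 (Function.update z i (y i + r₂))) - f (WithLp.toLp 2 (Function.update z i (y i - r₂)))) / (2 * r₂)
        - G z i|) B (volume : Measure (EuclideanSpace ℝ (Fin (m+1)))) :=
    fun i => ((hgtc i).sub (hGicB i)).abs.integrableOn_compact hBcomp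
  have hint1' : ∀ i : Fin (m+1), Integrable (fun z : EuclideanSpace ℝ (Fin (m+1)) =>
      |(f (WithLp.toLp 2 (Function.update z i (y i + r₂))) - f (WithLp.toLp 2 (Function.update z i (y i - r₂)))) / (2 * r₂)
        - G z i|) ((volume : Measure (EuclideanSpace ℝ (Fin (m+1)))).restrict B) := fun i => hint1 i
  have hint2 : ∀ i : Fin (m+1), IntegrableOn (fun z => |G z i - gy i|) B (volume : Measure (EuclideanSpace ℝ (Fin (m+1)))) :=
    fun i => (((hGic i).sub continuousOn_const).abs.mono hBU).integrableOn_compact hBcomp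
  have hint2' : ∀ i : Fin (m+1), Integrable (fun z => |G z i - gy i|)
      ((volume : Measure (EuclideanSpace ℝ (Fin (m+1)))).restrict B) := fun i => hint2 i
  have hs1 : ∫ z in B, ∑ i, |(f (WithLp.toLp 2 (Function.update z i (y i + r₂)))
      - f (WithLp.toLp 2 (Function.update z i (y i - r₂)))) / (2 * r₂) - G z i|
      = ∑ i, ∫ z in B, |(f (WithLp.toLp 2 (Function.update z i (y i + r₂)))
        - f (WithLp.toLp 2 (Function.update z i (y i - r₂)))) / (2 * r₂) - G z i| :=
    integral_finset_sum Finset.univ fun i _ => hint1' i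
  have hs2 : ∫ z in B, ∑ i, |G z i - gy i| = ∑ i, ∫ z in B, |G z i - gy i| :=
    integral_finset_sum Finset.univ fun i _ => hint2' i
  have hsum : ∫ z in B, ∑ i, |(f (WithLp.toLp 2 (Function.update z i (y i + r₂)))
      - f (WithLp.toLp 2 (Function.update z i (y i - r₂)))) / (2 * r₂) - G z i|
      ≤ 2 * ∫ z in B, ∑ i, |G z i - gy i| := by
    rw [hs1, hs2, Finset.mul_sum]
    exact Finset.sum_le_sum fun i _ => hkey i
  have hCpos : (0:ℝ) ≤ ((2 * r₂) ^ (m+1))⁻¹ := by positivity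
  calc ((2 * r₂) ^ (m+1))⁻¹ * ∫ z in B, ∑ i, |(f (WithLp.toLp 2 (Function.update z i (y i + r₂)))
        - f (WithLp.toLp 2 (Function.update z i (y i - r₂)))) / (2 * r₂) - G z i|
      ≤ ((2 * r₂) ^ (m+1))⁻¹ * (2 * ∫ z in B, ∑ i, |G z i - gy i|) :=
        mul_le_mul_of_nonneg_left hsum hCpos
    _ = 2 * (((2 * r₂) ^ (m+1))⁻¹ * ∫ z in B, ∑ i, |G z i - gy i|) := by ring
end
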